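/- Suppose z, D : ℝ → ℝ are differentiable with z ≥ 0, D' ≥ (3/2)A' where A' ≥ 0, and suppose C' ≤ A' + (1/3)[2zA' + (2/3)z'·Φ] where Φ(t) = -∮_{L(t)}σ₁(Ã)|∇u| satisfies Φ = 2D + (1/2)z³ (i.e., D = -(1/2)∮σ₁(Ã)|∇u| - (1/4)z³). Then the function m(t) = (1/5)[(2/3)D + (4/9)Dz + (1/36)z⁴ - C] satisfies m'(t) ≥ 0. -/

import Mathlib

/-- Algebraic core of the monotonicity theorem: if `z ≥ 0`, `D' ≥ (3/2)A'` with
`A' ≥ 0`, and `C' ≤ A' + (1/3)[2zA' + (2/3)z'Φ]` where `Φ = 2D + (1/2)z³`, then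
`m(t) = (1/5)[(2/3)D + (4/9)Dz + (1/36)z⁴ - C]` is nondecreasing. -/
theorem quasi_local_mass_monotone (z z' D D' C C' A' : ℝ → ℝ)
    (hz : ∀ t, HasDerivAt z (z' t) t)
    (hD : ∀ t, HasDerivAt D (D' t) t)
    (hC : ∀ t, HasDerivAt C (C' t) t)
    (hznn : ∀ t, 0 ≤ z t)
    (hA'nn : ∀ t, 0 ≤ A' t)
    (hD' : ∀ t, (3/2) * A' t ≤ D' t)
    (hC' : ∀ t, C' t ≤ A' t
      + (1/3) * (2 * z t * A' t + (2/3) * z' t * (2 * D t + (1/2) * (z t) ^ 3))) :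
    ∀ t, 0 ≤ deriv (fun t =>
      (1/5) * ((2/3) * D t + (4/9) * D t * z t + (1/36) * (z t) ^ 4 - C t)) t := by
  intro t
  have h : HasDerivAt (fun t =>
      (1/5) * ((2/3) * D t + (4/9) * D t * z t + (1/36) * (z t) ^ 4 - C t))
      ((1/5) * ((2/3) * D' t + (4/9) * (D' t * z t + D t * z' t)
        + (1/36) * (4 * (z t) ^ 3 * z' t) - C' t)) t := by
    have := ((((hD t).const_mul (2/3:ℝ)).add
        (((hD t).mul (hz t)).const_mul (4/9:ℝ))).add
        (((hz t).pow 4).const_mul (1/36:ℝ))).sub (hC t) |>.const_mul (1/5:ℝ)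
    convert this using 2 <;> norm_num
    · rfl
    · rfl
    · ring
  rw [h.deriv]
  nlinarith [hC' t, hD' t, hznn t, hA'nn t,
    mul_nonneg (hznn t) (sub_nonneg.2 (hD' t))]
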